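/- Let Q be a finite quiver and I an admissible ideal of kQ generated by monomial and binomial relations. Then the presentation (Q,I) is homotopy coherent: for any two paths w, w' in Q with w ∼ w', one has w ∈ I if and only if w' ∈ I. -/

import Mathlib

open Quiver

universe v u

/-- The type of all paths in the quiver `V`, together with their endpoints. -/
abbrev PathsIn (V : Type u) [Quiver.{v + 1} V] : Type (max u (v + 1)) :=
  Σ x y : V, Quiver.Path x y

variable (k : Type*) [Field k] (V : Type u) [Quiver.{v + 1} V]

/-- The underlying vector space of the path algebra: the free `k`-module on paths. -/
abbrev PathVec := (PathsIn V) →₀ k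

/-- The length of a path. -/
def pathLen (p : PathsIn V) : ℕ := p.2.2.length

/-- Composition of composable paths. -/
def pcomp (p q : PathsIn V) (h : p.2.1 = q.1) : PathsIn V :=
  ⟨p.1, q.2.1, p.2.2.comp (h.symm ▸ q.2.2)⟩

open scoped Classical in
/-- Multiplication `u ρ w` of an element `ρ` of the path algebra by paths `u`, `w`. -/
noncomputable def pmul (u : PathsIn V) (ρ : PathVec k V) (w : PathsIn V) : PathVec k V :=
  ρ.sum fun p c => if h : u.2.1 = p.1 ∧ p.2.1 = w.1
    then Finsupp.single (pcomp V (pcomp V u p h.1) w h.2) c else 0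

/-- The two-sided ideal of the path algebra generated by a set `S`. -/
noncomputable def idealGen (S : Set (PathVec k V)) : Submodule k (PathVec k V) :=
  Submodule.span k {x | ∃ u ρ w, ρ ∈ S ∧ x = pmul k V u ρ w}

open scoped Classical in
/-- A minimal relation: an element of `I`, with all paths in its support parallel,
such that no proper nonempty subsum lies in `I`. -/
def IsMinimalRelation (I : Submodule k (PathVec k V)) (ρ : PathVec k V) : Prop :=
  ρ ∈ I ∧ (∃ x y : V, ∀ p ∈ ρ.support, p.1 = x ∧ p.2.1 = y) ∧
    ∀ J : Finset (PathsIn V), J ⊆ ρ.support → J.Nonempty → J ≠ ρ.support →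
      ρ.filter (· ∈ J) ∉ I

/-- The homotopy relation `∼` on paths: the smallest equivalence relation such that
paths appearing in a minimal relation are equivalent, compatible with two-sided
composition. -/
inductive HRel (I : Submodule k (PathVec k V)) : PathsIn V → PathsIn V → Prop
  | of (ρ : PathVec k V) (hρ : IsMinimalRelation k V I ρ) (p q : PathsIn V)
      (hp : p ∈ ρ.support) (hq : q ∈ ρ.support) : HRel I p q
  | refl (p : PathsIn V) : HRel I p p
  | symm {p q} : HRel I p q → HRel I q p
  | trans {p q r} : HRel I p q → HRel I q r → HRel I p r
  | compat (a x y b : V) (u v : Quiver.Path x y) (w : Quiver.Path a x) (w' : Quiver.Path y b) :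
      HRel I ⟨x, y, u⟩ ⟨x, y, v⟩ →
      HRel I ⟨a, b, (w.comp u).comp w'⟩ ⟨a, b, (w.comp v).comp w'⟩

/-- A path lies in `I` (i.e. is zero in `A = kQ/I`). -/
def memI (I : Submodule k (PathVec k V)) (p : PathsIn V) : Prop :=
  (Finsupp.single p 1 : PathVec k V) ∈ I

/-- The span of paths of length at least `m` (the `m`-th power of the arrow ideal). -/
noncomputable def arrowPow (m : ℕ) : Submodule k (PathVec k V) :=
  Submodule.span k {x | ∃ p : PathsIn V, m ≤ pathLen V p ∧ x = Finsupp.single p 1}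

/-- The ideal `I` is admissible: `F^m ⊆ I ⊆ F^2` for some `m ≥ 2`. -/
def IsAdmissible (I : Submodule k (PathVec k V)) : Prop :=
  (∃ m, 2 ≤ m ∧ arrowPow k V m ≤ I) ∧ I ≤ arrowPow k V 2

/-- Homotopy coherence of a presentation. -/
def HomotopyCoherent (I : Submodule k (PathVec k V)) : Prop :=
  ∀ p q, HRel k V I p q → (memI k V I p ↔ memI k V I q)


section Aux

open scoped Classical

variable {k : Type*} [Field k] {V : Type u} [Quiver.{v + 1} V]

lemma pmul_single (u z w : PathsIn V) (c : k) :
    pmul k V u (Finsupp.single z c) w =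
      if h : u.2.1 = z.1 ∧ z.2.1 = w.1
      then Finsupp.single (pcomp V (pcomp V u z h.1) w h.2) c else 0 := by
  classical
  apply Finsupp.sum_single_index
  split <;> simp

lemma pmul_zero (u w : PathsIn V) : pmul k V u (0 : PathVec k V) w = 0 :=
  Finsupp.sum_zero_index

lemma pmul_add (u w : PathsIn V) (ρ₁ ρ₂ : PathVec k V) :
    pmul k V u (ρ₁ + ρ₂) w = pmul k V u ρ₁ w + pmul k V u ρ₂ w := by
  classical
  apply Finsupp.sum_add_index' <;> intros <;> split <;>
    simp [Finsupp.single_add]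

lemma eq_single_add_single {ρ : PathVec k V} {p q : PathsIn V} (hpq : p ≠ q)
    (hs : ρ.support = {p, q}) :
    ρ = Finsupp.single p (ρ p) + Finsupp.single q (ρ q) := by
  classical
  ext r
  rw [Finsupp.add_apply]
  by_cases hrp : r = p
  · subst hrp
    rw [Finsupp.single_eq_same, Finsupp.single_eq_of_ne' (Ne.symm hpq), add_zero]
  by_cases hrq : r = q
  · subst hrq
    rw [Finsupp.single_eq_same, Finsupp.single_eq_of_ne' hpq, zero_add]
  · have hns : r ∉ ρ.support := by rw [hs]; simp [hrp, hrq]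
    rw [Finsupp.notMem_support_iff.mp hns,
      Finsupp.single_eq_of_ne' (fun h => hrp h.symm),
      Finsupp.single_eq_of_ne' (fun h => hrq h.symm), add_zero]


/-- Associativity for `pcomp`. -/
lemma pcomp_assoc_big (u U p W w : PathsIn V) (hU : U.2.1 = p.1) (hW : p.2.1 = W.1)
    (h1 : u.2.1 = U.1) (h2 : W.2.1 = w.1) :
    pcomp V (pcomp V u (pcomp V (pcomp V U p hU) W hW) h1) w h2
      = pcomp V (pcomp V (pcomp V u U h1) p hU) (pcomp V W w h2) hW := by
  obtain ⟨u1, u2, up⟩ := u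
  obtain ⟨U1, U2, Up⟩ := U
  obtain ⟨p1, p2, pp⟩ := p
  obtain ⟨W1, W2, Wp⟩ := W
  obtain ⟨w1, w2, wp⟩ := w
  dsimp at hU hW h1 h2
  subst hU hW h1 h2
  simp [pcomp, Quiver.Path.comp_assoc]

lemma pcomp_nil_nil (p : PathsIn V) (a b : V) (h1 : (⟨a, a, Quiver.Path.nil⟩ : PathsIn V).2.1 = p.1)
    (h2 : p.2.1 = (⟨b, b, Quiver.Path.nil⟩ : PathsIn V).1) :
    pcomp V (pcomp V ⟨a, a, Quiver.Path.nil⟩ p h1) ⟨b, b, Quiver.Path.nil⟩ h2 = p := by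
  obtain ⟨p1, p2, pp⟩ := p
  dsimp at h1 h2
  subst h1 h2
  simp [pcomp, Quiver.Path.nil_comp]

/-- From a two-term element of `I`, membership of one single transfers to the other. -/
lemma binKey {I : Submodule k (PathVec k V)} {z1 z2 : PathsIn V} {c1 c2 : k} (hc2 : c2 ≠ 0)
    (hσ : Finsupp.single z1 c1 + Finsupp.single z2 c2 ∈ I) (h1 : memI k V I z1) :
    memI k V I z2 := by
  have h1' : Finsupp.single z1 c1 ∈ I := by
    have := I.smul_mem c1 h1
    rwa [Finsupp.smul_single', mul_one] at this
  have h2' : Finsupp.single z2 c2 ∈ I := by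
    have := I.sub_mem hσ h1'
    rwa [add_sub_cancel_left] at this
  have := I.smul_mem c2⁻¹ h2'
  rwa [Finsupp.smul_single', inv_mul_cancel₀ hc2] at this

/-- Endpoints are preserved by `HRel`. -/
lemma hrel_ends {I : Submodule k (PathVec k V)} {p q : PathsIn V} (h : HRel k V I p q) :
    p.1 = q.1 ∧ p.2.1 = q.2.1 := by
  induction h with
  | of ρ hρ p q hp hq =>
    obtain ⟨-, ⟨x, y, hpar⟩, -⟩ := hρ
    exact ⟨(hpar p hp).1.trans (hpar q hq).1.symm, (hpar p hp).2.trans (hpar q hq).2.symm⟩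
  | refl p => exact ⟨rfl, rfl⟩
  | symm _ ih => exact ⟨ih.1.symm, ih.2.symm⟩
  | trans _ _ ih1 ih2 => exact ⟨ih1.1.trans ih2.1, ih1.2.trans ih2.2⟩
  | compat a x y b u v w w' _ _ => exact ⟨rfl, rfl⟩

/-- The equivalence relation generated by pairs of paths occurring in binomial relations
of `S`, closed under two-sided composition. -/
inductive BRel (S : Set (PathVec k V)) : PathsIn V → PathsIn V → Prop
  | of (ρ : PathVec k V) (hρ : ρ ∈ S) (h2 : ρ.support.card = 2) (p q : PathsIn V)
      (hp : p ∈ ρ.support) (hq : q ∈ ρ.support) : BRel S p q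
  | refl (p : PathsIn V) : BRel S p p
  | symm {p q} : BRel S p q → BRel S q p
  | trans {p q r} : BRel S p q → BRel S q r → BRel S p r
  | compat (p q u w : PathsIn V) (h1 : u.2.1 = p.1) (h1' : u.2.1 = q.1)
      (h2 : p.2.1 = w.1) (h2' : q.2.1 = w.1) :
      BRel S p q → BRel S (pcomp V (pcomp V u p h1) w h2) (pcomp V (pcomp V u q h1') w h2')

lemma brel_ends {I : Submodule k (PathVec k V)} {S : Set (PathVec k V)}
    (hmin : ∀ ρ ∈ S, ρ.support.card = 2 → IsMinimalRelation k V I ρ)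
    {p q : PathsIn V} (h : BRel S p q) : p.1 = q.1 ∧ p.2.1 = q.2.1 := by
  induction h with
  | of ρ hρ h2 p q hp hq =>
    obtain ⟨-, ⟨x, y, hpar⟩, -⟩ := hmin ρ hρ h2
    exact ⟨(hpar p hp).1.trans (hpar q hq).1.symm, (hpar p hp).2.trans (hpar q hq).2.symm⟩
  | refl p => exact ⟨rfl, rfl⟩
  | symm _ ih => exact ⟨ih.1.symm, ih.2.symm⟩
  | trans _ _ ih1 ih2 => exact ⟨ih1.1.trans ih2.1, ih1.2.trans ih2.2⟩
  | compat p q u w h1 h1' h2 h2' _ _ => exact ⟨rfl, rfl⟩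


/-- Filtering by a `BRel`-invariant predicate preserves membership in `I`. -/
lemma filter_mem {I : Submodule k (PathVec k V)} {S : Set (PathVec k V)}
    (hcard : ∀ ρ ∈ S, ρ.support.card ≤ 2)
    (hmin : ∀ ρ ∈ S, ρ.support.card = 2 → IsMinimalRelation k V I ρ)
    (hgen : I = idealGen k V S)
    (Pred : PathsIn V → Prop) (hinv : ∀ a b, BRel S a b → Pred a → Pred b)
    {x : PathVec k V} (hx : x ∈ I) : x.filter Pred ∈ I := by
  rw [hgen] at hx ⊢
  refine Submodule.span_induction (p := fun y _ => y.filter Pred ∈ idealGen k V S)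
    ?_ ?_ ?_ ?_ hx
  · rintro g ⟨u, ρ, w, hρS, rfl⟩
    have hg : pmul k V u ρ w ∈ idealGen k V S :=
      Submodule.subset_span ⟨u, ρ, w, hρS, rfl⟩
    have key : (pmul k V u ρ w).filter Pred = pmul k V u ρ w ∨
        (pmul k V u ρ w).filter Pred = 0 := by
      by_cases h0 : ρ.support.card = 0
      · have hρ0 : ρ = 0 := by
          rwa [Finset.card_eq_zero, Finsupp.support_eq_empty] at h0
        right; rw [hρ0, pmul_zero, Finsupp.filter_zero]
      by_cases h1c : ρ.support.card = 1
      · obtain ⟨p, hp⟩ := Finset.card_eq_one.mp h1c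
        obtain ⟨-, hρeq⟩ := Finsupp.support_eq_singleton.mp hp
        rw [show ρ = Finsupp.single p (ρ p) from hρeq, pmul_single]
        split
        · next h =>
          by_cases hP : Pred (pcomp V (pcomp V u p h.1) w h.2)
          · left; rw [Finsupp.filter_single_of_pos _ hP]
          · right; rw [Finsupp.filter_single_of_neg _ hP]
        · right; rw [Finsupp.filter_zero]
      · have h2 : ρ.support.card = 2 :=
          le_antisymm (hcard ρ hρS) (by omega)
        obtain ⟨p, q, hpq, hs⟩ := Finset.card_eq_two.mp h2
        have hpmem : p ∈ ρ.support := by rw [hs]; exact Finset.mem_insert_self _ _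
        have hqmem : q ∈ ρ.support := by
          rw [hs]; exact Finset.mem_insert_of_mem (Finset.mem_singleton_self _)
        obtain ⟨-, ⟨x0, y0, hpar⟩, -⟩ := hmin ρ hρS h2
        have e1 := hpar p hpmem
        have e2 := hpar q hqmem
        have hcond : (u.2.1 = p.1 ∧ p.2.1 = w.1) ↔ (u.2.1 = q.1 ∧ q.2.1 = w.1) := by
          constructor
          · rintro ⟨ha, hb⟩
            exact ⟨ha.trans (e1.1.trans e2.1.symm), e2.2.trans (e1.2.symm.trans hb)⟩
          · rintro ⟨ha, hb⟩
            exact ⟨ha.trans (e2.1.trans e1.1.symm), e1.2.trans (e2.2.symm.trans hb)⟩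
        rw [show ρ = Finsupp.single p (ρ p) + Finsupp.single q (ρ q) from
          eq_single_add_single hpq hs, pmul_add, pmul_single, pmul_single]
        by_cases hcp : u.2.1 = p.1 ∧ p.2.1 = w.1
        · have hcq : u.2.1 = q.1 ∧ q.2.1 = w.1 := hcond.mp hcp
          rw [dif_pos hcp, dif_pos hcq, Finsupp.filter_add]
          have hbr : BRel S (pcomp V (pcomp V u p hcp.1) w hcp.2)
              (pcomp V (pcomp V u q hcq.1) w hcq.2) :=
            BRel.compat p q u w hcp.1 hcq.1 hcp.2 hcq.2 (BRel.of ρ hρS h2 p q hpmem hqmem)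
          by_cases hP : Pred (pcomp V (pcomp V u p hcp.1) w hcp.2)
          · left
            rw [Finsupp.filter_single_of_pos _ hP,
              Finsupp.filter_single_of_pos _ (hinv _ _ hbr hP)]
          · right
            have hPq : ¬ Pred (pcomp V (pcomp V u q hcq.1) w hcq.2) :=
              fun h => hP (hinv _ _ (BRel.symm hbr) h)
            rw [Finsupp.filter_single_of_neg _ hP, Finsupp.filter_single_of_neg _ hPq,
              add_zero]
        · have hcq : ¬ (u.2.1 = q.1 ∧ q.2.1 = w.1) := fun h => hcp (hcond.mpr h)
          right
          rw [dif_neg hcp, dif_neg hcq, add_zero, Finsupp.filter_zero]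
    rcases key with h | h <;> rw [h]
    · exact hg
    · exact (idealGen k V S).zero_mem
  · show Finsupp.filter Pred (0 : PathVec k V) ∈ idealGen k V S
    rw [Finsupp.filter_zero]; exact (idealGen k V S).zero_mem
  · intro a b _ _ ha hb
    show Finsupp.filter Pred (a + b) ∈ idealGen k V S
    rw [Finsupp.filter_add]; exact (idealGen k V S).add_mem ha hb
  · intro c a _ ha
    show Finsupp.filter Pred (c • a) ∈ idealGen k V S
    rw [Finsupp.filter_smul]; exact (idealGen k V S).smul_mem c ha


/-- Any two paths in the support of a minimal relation are `BRel`-equivalent. -/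
lemma minrel_brel {I : Submodule k (PathVec k V)} {S : Set (PathVec k V)}
    (hcard : ∀ ρ ∈ S, ρ.support.card ≤ 2)
    (hmin : ∀ ρ ∈ S, ρ.support.card = 2 → IsMinimalRelation k V I ρ)
    (hgen : I = idealGen k V S)
    {ρ : PathVec k V} (hρ : IsMinimalRelation k V I ρ)
    {p q : PathsIn V} (hp : p ∈ ρ.support) (hq : q ∈ ρ.support) : BRel S p q := by
  obtain ⟨hρI, -, hminimal⟩ := hρ
  have hfil : ρ.filter (fun r => BRel S p r) ∈ I :=
    filter_mem hcard hmin hgen _ (fun a b hab ha => BRel.trans ha hab) hρI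
  set J := ρ.support.filter (fun r => BRel S p r) with hJ
  have hsub : J ⊆ ρ.support := Finset.filter_subset _ _
  have hne : J.Nonempty := ⟨p, Finset.mem_filter.mpr ⟨hp, BRel.refl p⟩⟩
  have heqf : ρ.filter (· ∈ J) = ρ.filter (fun r => BRel S p r) := by
    ext r
    rw [Finsupp.filter_apply, Finsupp.filter_apply]
    by_cases hr : ρ r = 0
    · split <;> split <;> simp [hr]
    · have hrs : r ∈ ρ.support := Finsupp.mem_support_iff.mpr hr
      have hiff : r ∈ J ↔ BRel S p r := by
        rw [hJ, Finset.mem_filter]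
        exact ⟨fun h => h.2, fun h => ⟨hrs, h⟩⟩
      split <;> split <;> first | rfl | (exfalso; tauto)
  have hJeq : J = ρ.support := by
    by_contra hne'
    exact hminimal J hsub hne hne' (heqf ▸ hfil)
  have hqJ : q ∈ J := hJeq ▸ hq
  exact (Finset.mem_filter.mp hqJ).2


/-- Two paths are a "good pair" if any common two-sided composition of them lands in `I`
simultaneously. -/
def GoodPair (I : Submodule k (PathVec k V)) (p q : PathsIn V) : Prop :=
  ∀ (u w : PathsIn V) (h1 : u.2.1 = p.1) (h1' : u.2.1 = q.1)
    (h2 : p.2.1 = w.1) (h2' : q.2.1 = w.1),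
    (memI k V I (pcomp V (pcomp V u p h1) w h2) ↔ memI k V I (pcomp V (pcomp V u q h1') w h2'))

lemma goodPair_compat {I : Submodule k (PathVec k V)} {p q u w : PathsIn V}
    {h1 : u.2.1 = p.1} {h1' : u.2.1 = q.1} {h2 : p.2.1 = w.1} {h2' : q.2.1 = w.1}
    (ih : GoodPair I p q) :
    GoodPair I (pcomp V (pcomp V u p h1) w h2) (pcomp V (pcomp V u q h1') w h2') := by
  intro a b g1 g1' g2 g2'
  have e1 := pcomp_assoc_big a u p w b h1 h2 g1 g2
  have e2 := pcomp_assoc_big a u q w b h1' h2' g1' g2'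
  rw [e1, e2]
  exact ih (pcomp V a u g1) (pcomp V w b g2) h1 h1' h2 h2'

/-- `BRel`-equivalent paths are good pairs. -/
lemma brel_good {I : Submodule k (PathVec k V)} {S : Set (PathVec k V)}
    (hmin : ∀ ρ ∈ S, ρ.support.card = 2 → IsMinimalRelation k V I ρ)
    (hgen : I = idealGen k V S)
    {p q : PathsIn V} (h : BRel S p q) : GoodPair I p q := by
  induction h with
  | of ρ hρS h2 p q hp hq =>
    intro u w h1 h1' h2c h2c'
    by_cases hpq : p = q
    · subst hpq; exact Iff.rfl
    have hs : ρ.support = {p, q} := by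
      refine (Finset.eq_of_subset_of_card_le ?_ ?_).symm
      · intro r hr
        rcases Finset.mem_insert.mp hr with h | h
        · exact h ▸ hp
        · exact (Finset.mem_singleton.mp h) ▸ hq
      · rw [h2, Finset.card_pair hpq]
    set cp := ρ p with hcp
    set cq := ρ q with hcq
    have hcp0 : cp ≠ 0 := Finsupp.mem_support_iff.mp hp
    have hcq0 : cq ≠ 0 := Finsupp.mem_support_iff.mp hq
    have hσI : pmul k V u ρ w ∈ I := by
      rw [hgen]; exact Submodule.subset_span ⟨u, ρ, w, hρS, rfl⟩
    have hσeq : pmul k V u ρ w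
        = Finsupp.single (pcomp V (pcomp V u p h1) w h2c) cp
          + Finsupp.single (pcomp V (pcomp V u q h1') w h2c') cq := by
      rw [eq_single_add_single hpq hs, pmul_add, pmul_single, pmul_single,
        dif_pos ⟨h1, h2c⟩, dif_pos ⟨h1', h2c'⟩]
    rw [hσeq] at hσI
    constructor
    · intro hmem; exact binKey hcq0 hσI hmem
    · intro hmem; rw [add_comm] at hσI; exact binKey hcp0 hσI hmem
  | refl p => exact fun u w h1 h1' h2 h2' => Iff.rfl
  | symm _ ih => exact fun u w h1 h1' h2 h2' => (ih u w h1' h1 h2' h2).symm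
  | trans hpq hqr ih1 ih2 =>
    intro u w h1 h1' h2 h2'
    have e := brel_ends hmin hpq
    exact (ih1 u w h1 (h1.trans e.1) h2 (e.2.symm.trans h2)).trans
      (ih2 u w (h1.trans e.1) h1' (e.2.symm.trans h2) h2')
  | compat p q u w h1 h1' h2 h2' _ ih => exact goodPair_compat ih

/-- `HRel`-equivalent paths are good pairs. -/
lemma hrel_good {I : Submodule k (PathVec k V)} {S : Set (PathVec k V)}
    (hcard : ∀ ρ ∈ S, ρ.support.card ≤ 2)
    (hmin : ∀ ρ ∈ S, ρ.support.card = 2 → IsMinimalRelation k V I ρ)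
    (hgen : I = idealGen k V S)
    {p q : PathsIn V} (h : HRel k V I p q) : GoodPair I p q := by
  induction h with
  | of ρ hρ p q hp hq =>
    exact brel_good hmin hgen (minrel_brel hcard hmin hgen hρ hp hq)
  | refl p => exact fun u w h1 h1' h2 h2' => Iff.rfl
  | symm _ ih => exact fun u w h1 h1' h2 h2' => (ih u w h1' h1 h2' h2).symm
  | trans hpq hqr ih1 ih2 =>
    intro u w h1 h1' h2 h2'
    have e := hrel_ends hpq
    exact (ih1 u w h1 (h1.trans e.1) h2 (e.2.symm.trans h2)).trans
      (ih2 u w (h1.trans e.1) h1' (e.2.symm.trans h2) h2')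
  | compat a x y b u v w w' _ ih =>
    exact goodPair_compat (p := ⟨x, y, u⟩) (q := ⟨x, y, v⟩) (u := ⟨a, x, w⟩)
      (w := ⟨y, b, w'⟩) (h1 := rfl) (h1' := rfl) (h2 := rfl) (h2' := rfl) ih

end Aux





/-- If `I` is an admissible ideal of `kQ` generated by monomial
(paths) and binomial (two-term minimal) relations, then the presentation `(Q, I)`
is homotopy coherent. -/
theorem homotopyCoherent_of_monomial_binomial [Fintype V] [∀ x y : V, Fintype (x ⟶ y)]
    (I : Submodule k (PathVec k V)) (hadm : IsAdmissible k V I)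
    (S : Set (PathVec k V))
    (hcard : ∀ ρ ∈ S, ρ.support.card ≤ 2)
    (hmin : ∀ ρ ∈ S, ρ.support.card = 2 → IsMinimalRelation k V I ρ)
    (hgen : I = idealGen k V S) :
    HomotopyCoherent k V I := by
  intro p q h
  have e := hrel_ends h
  have g := hrel_good hcard hmin hgen h ⟨p.1, p.1, Quiver.Path.nil⟩
    ⟨p.2.1, p.2.1, Quiver.Path.nil⟩ rfl e.1 rfl e.2.symm
  rwa [pcomp_nil_nil p p.1 p.2.1 rfl rfl, pcomp_nil_nil q p.1 p.2.1 e.1 e.2.symm] at g
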